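/- Let α⁻ ≥ α⁺ > 1 and define λ = (α⁻−1)/(α⁺α⁻−1), λ* = (α⁺−1)/(α⁺α⁻−1), γ = (α⁺−1)(α⁻−1)/(α⁺α⁻−1), so that λ, λ*, γ > 0 and λ+λ*+γ = 1. Let (ν_t⁺)_{t≥0} be Borel probability measures with ν_0⁺ = δ_0 and ν_t⁺((0,∞)) = 1 for t > 0, with finite first moments locally bounded in t, satisfying for every f ∈ C_b²(ℝ) the equation ⟨ν_t⁺,f⟩ = f(0) + α⁺ ∫_0^t ∫_ℝ f'(x) ν_s⁺(dx) ds + (1/2) ∫_0^t ∬_{ℝ²} Δf(x,y)·(x+y) ν_s⁺(dx)ν_s⁺(dy) ds, and let (ν_t⁻)_{t≥0} be the reflections ν_t⁻(A) := η_t(−A) of a family (η_t)_{t≥0} satisfying the same equation with α⁺ replaced by α⁻ (so ν_t⁻ is supported in (−∞,0) for t > 0, ν_0⁻ = δ_0). Define μ_t := λ·ν⁺_{λt} + γ·δ_0 + λ*·ν⁻_{λ* t}. Then (μ_t)_{t≥0} satisfies, for every f ∈ C_b²(ℝ) and t ≥ 0, ⟨μ_t,f⟩ = f(0) + α ∫_0^t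 ∫_ℝ f'(x) μ_s(dx) ds + (1/2) ∫_0^t ∬_{ℝ²} Δf(x,y)·(|x|+|y|) μ_s(dx)μ_s(dy) ds, where α = (α⁻−α⁺)/(α⁺α⁻−1) ∈ [0,1). -/

import Mathlib

open MeasureTheory Filter Set

/-- The difference quotient of the derivative: `Δf(x,y) = (f'(x)-f'(y))/(x-y)` for `x ≠ y`,
and `Δf(x,x) = f''(x)`. -/
noncomputable def deltaF (f : ℝ → ℝ) (x y : ℝ) : ℝ :=
  if x = y then deriv (deriv f) x else (deriv f x - deriv f y) / (x - y)

/-- `C_b²(ℝ)`: twice continuously differentiable with `f`, `f'`, `f''` bounded. -/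
def CbTwo (f : ℝ → ℝ) : Prop :=
  ContDiff ℝ 2 f ∧ ∃ C : ℝ, ∀ x : ℝ,
    |f x| ≤ C ∧ |deriv f x| ≤ C ∧ |deriv (deriv f) x| ≤ C

open Topology
open scoped Interval

section Calc

variable {f : ℝ → ℝ}

private lemma cb_diff1 (hf : CbTwo f) : Differentiable ℝ f := by
  have h2 : ContDiff ℝ ((1:WithTop ℕ∞)+1) f := by norm_num; exact hf.1
  exact (contDiff_succ_iff_deriv.1 h2).1

private lemma cb_cd1 (hf : CbTwo f) : ContDiff ℝ 1 (deriv f) := by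
  have h2 : ContDiff ℝ ((1:WithTop ℕ∞)+1) f := by norm_num; exact hf.1
  exact (contDiff_succ_iff_deriv.1 h2).2.2

private lemma cb_diff2 (hf : CbTwo f) : Differentiable ℝ (deriv f) := by
  have h2 : ContDiff ℝ ((0:WithTop ℕ∞)+1) (deriv f) := by norm_num; exact cb_cd1 hf
  exact (contDiff_succ_iff_deriv.1 h2).1

private lemma cb_cont1 (hf : CbTwo f) : Continuous (deriv f) := (cb_cd1 hf).continuous

private lemma cb_cont2 (hf : CbTwo f) : Continuous (deriv (deriv f)) := by
  have h2 : ContDiff ℝ ((0:WithTop ℕ∞)+1) (deriv f) := by norm_num; exact cb_cd1 hf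
  exact (contDiff_succ_iff_deriv.1 h2).2.2.continuous

private lemma deltaF_mul_sub (f : ℝ → ℝ) (x y : ℝ) :
    deltaF f x y * (x - y) = deriv f x - deriv f y := by
  unfold deltaF
  by_cases h : x = y
  · simp [h]
  · rw [if_neg h, div_mul_cancel₀]
    exact sub_ne_zero.2 h

private lemma measurable_deltaF_pair (hf : CbTwo f) :
    Measurable (fun p : ℝ × ℝ => deltaF f p.1 p.2) := by
  unfold deltaF
  apply Measurable.ite (measurableSet_eq_fun measurable_fst measurable_snd)
  · exact ((cb_cont2 hf).measurable).comp measurable_fst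
  · apply Measurable.div
    · exact (((cb_cont1 hf).measurable).comp measurable_fst).sub
        (((cb_cont1 hf).measurable).comp measurable_snd)
    · exact measurable_fst.sub measurable_snd

private lemma abs_deltaF_le (hf : CbTwo f) {C : ℝ}
    (hC : ∀ x, |deriv (deriv f) x| ≤ C) (x y : ℝ) : |deltaF f x y| ≤ C := by
  have key : ∀ a b : ℝ, a < b → |(deriv f b - deriv f a) / (b - a)| ≤ C := by
    intro a b hab
    obtain ⟨c, _, hc⟩ := exists_hasDerivAt_eq_slope (deriv f) (deriv (deriv f)) hab
      (cb_cont1 hf).continuousOn (fun z _ => ((cb_diff2 hf) z).hasDerivAt)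
    rw [← hc]; exact hC c
  unfold deltaF
  rcases lt_trichotomy x y with h | h | h
  · rw [if_neg h.ne]
    have : (deriv f x - deriv f y) / (x - y) = (deriv f y - deriv f x) / (y - x) := by
      rw [← neg_sub (deriv f y), ← neg_sub y x, neg_div_neg_eq]
    rw [this]; exact key x y h
  · rw [if_pos h]; exact hC x
  · rw [if_neg (ne_of_gt h)]; exact key y x h

private lemma deriv_negcomp (f : ℝ → ℝ) :
    deriv (fun z => f (-z)) = fun z => -deriv f (-z) := by
  funext z; exact deriv_comp_neg f z

private lemma deriv2_negcomp (f : ℝ → ℝ) :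
    deriv (deriv (fun z => f (-z))) = fun z => deriv (deriv f) (-z) := by
  rw [deriv_negcomp f]
  funext z
  have : (fun z => -deriv f (-z)) = fun z => -((fun w => deriv f (-w)) z) := rfl
  rw [this, deriv.fun_neg, deriv_comp_neg (deriv f) z, neg_neg]

private lemma cbTwo_negcomp (hf : CbTwo f) : CbTwo (fun z => f (-z)) := by
  obtain ⟨hcd, C, hC⟩ := hf
  constructor
  · exact hcd.comp (contDiff_id.neg)
  · refine ⟨C, fun x => ?_⟩
    refine ⟨(hC (-x)).1, ?_, ?_⟩
    · rw [deriv_negcomp f]; rw [abs_neg]; exact (hC (-x)).2.1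
    · rw [deriv2_negcomp f]; exact (hC (-x)).2.2

private lemma deltaF_negcomp (f : ℝ → ℝ) (x y : ℝ) :
    deltaF (fun z => f (-z)) x y = deltaF f (-x) (-y) := by
  unfold deltaF
  by_cases h : x = y
  · rw [if_pos h, if_pos (by rw [h]), deriv2_negcomp f]
  · have h' : (-x : ℝ) ≠ -y := fun hc => h (by linarith [neg_injective hc])
    rw [if_neg h, if_neg h', deriv_negcomp f]
    rw [div_eq_div_iff (sub_ne_zero.2 h) (sub_ne_zero.2 h')]
    ring

end Calc

section Logistic

private noncomputable def Lg : ℝ → ℝ := fun x => (1 + Real.exp x)⁻¹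

private lemma Lg_den_pos (x : ℝ) : (0:ℝ) < 1 + Real.exp x := by positivity

private lemma hasDerivAt_Lg (x : ℝ) :
    HasDerivAt Lg (-Real.exp x / (1 + Real.exp x) ^ 2) x := by
  have h := ((Real.hasDerivAt_exp x).const_add 1).inv (Lg_den_pos x).ne'
  exact h

private lemma deriv_Lg : deriv Lg = fun x => -Real.exp x / (1 + Real.exp x) ^ 2 := by
  funext x; exact (hasDerivAt_Lg x).deriv

private lemma hasDerivAt_dLg (x : ℝ) :
    HasDerivAt (fun x => -Real.exp x / (1 + Real.exp x) ^ 2)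
      ((2 * Real.exp x ^ 2 - Real.exp x * (1 + Real.exp x)) / (1 + Real.exp x) ^ 3) x := by
  have hu : HasDerivAt (fun x => -Real.exp x) (-Real.exp x) x := (Real.hasDerivAt_exp x).neg
  have hw : HasDerivAt (fun x => (1 + Real.exp x) ^ 2)
      ((2 : ℕ) * (1 + Real.exp x) ^ 1 * Real.exp x) x :=
    ((Real.hasDerivAt_exp x).const_add 1).pow 2
  have hv : HasDerivAt (fun x => ((1 + Real.exp x) ^ 2)⁻¹)
      (-((2 : ℕ) * (1 + Real.exp x) ^ 1 * Real.exp x) / ((1 + Real.exp x) ^ 2) ^ 2) x :=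
    hw.inv (by positivity)
  have h := hu.mul hv
  have heq : (fun x => -Real.exp x / (1 + Real.exp x) ^ 2)
      = fun x => -Real.exp x * ((1 + Real.exp x) ^ 2)⁻¹ := by
    funext y; rw [div_eq_mul_inv]
  rw [heq]
  refine h.congr_deriv ?_
  have hd : (1 + Real.exp x) ≠ 0 := (Lg_den_pos x).ne'
  field_simp
  ring

private lemma deriv2_Lg (x : ℝ) :
    deriv (deriv Lg) x
      = (2 * Real.exp x ^ 2 - Real.exp x * (1 + Real.exp x)) / (1 + Real.exp x) ^ 3 := by
  rw [deriv_Lg]; exact (hasDerivAt_dLg x).deriv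

private lemma abs_Lg_le (x : ℝ) : |Lg x| ≤ 1 := by
  unfold Lg
  rw [abs_of_pos (by positivity)]
  rw [inv_le_one_iff₀]
  right; nlinarith [Real.exp_pos x]

private lemma abs_dLg_le (x : ℝ) : |deriv Lg x| ≤ 1 := by
  rw [deriv_Lg]
  have he := Real.exp_pos x
  rw [abs_div, abs_of_neg (neg_lt_zero.mpr he), abs_of_pos (by positivity)]
  rw [div_le_one (by positivity)]
  nlinarith

private lemma abs_ddLg_le (x : ℝ) : |deriv (deriv Lg) x| ≤ 3 := by
  rw [deriv2_Lg]
  have he := Real.exp_pos x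
  rw [abs_div, abs_of_pos (by positivity : (0:ℝ) < (1 + Real.exp x) ^ 3)]
  rw [div_le_iff₀ (by positivity)]
  rw [abs_le]
  constructor <;> nlinarith

private lemma cbTwo_Lg_affine (c d : ℝ) : CbTwo (fun x => Lg (c * x + d)) := by
  have haff : ∀ x : ℝ, HasDerivAt (fun x : ℝ => c * x + d) c x := by
    intro x
    simpa using ((hasDerivAt_id x).const_mul c).add_const d
  have hLgcd : ContDiff ℝ 2 Lg :=
    (contDiff_const.add Real.contDiff_exp).inv (fun x => (Lg_den_pos x).ne')
  have hder1 : deriv (fun x => Lg (c * x + d)) = fun x => deriv Lg (c * x + d) * c := by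
    funext x
    exact (HasDerivAt.comp x (hasDerivAt_Lg (c * x + d)) (haff x)).deriv.trans
      (show -Real.exp (c*x+d) / (1 + Real.exp (c*x+d))^2 * c = deriv Lg (c*x+d) * c by rw [(hasDerivAt_Lg (c*x+d)).deriv])
  have hder2 : deriv (deriv (fun x => Lg (c * x + d)))
      = fun x => deriv (deriv Lg) (c * x + d) * c * c := by
    rw [hder1]
    funext x
    have h1 : HasDerivAt (fun x => deriv Lg (c * x + d))
        (deriv (deriv Lg) (c * x + d) * c) x := by
      have := HasDerivAt.comp x (hasDerivAt_dLg (c * x + d)) (haff x)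
      rw [← deriv_Lg] at this
      rw [deriv2_Lg]; exact this
    exact (h1.mul_const c).deriv
  refine ⟨?_, 1 + |c| + 3 * c ^ 2, fun x => ?_⟩
  · refine hLgcd.comp ?_
    exact (contDiff_const.mul contDiff_id).add contDiff_const
  refine ⟨?_, ?_, ?_⟩
  · have := abs_Lg_le (c * x + d)
    have h1 : (0:ℝ) ≤ |c| := abs_nonneg c
    have h2 : (0:ℝ) ≤ c ^ 2 := sq_nonneg c
    linarith
  · rw [hder1]
    rw [abs_mul]
    have := abs_dLg_le (c * x + d)
    have h2 : (0:ℝ) ≤ c ^ 2 := sq_nonneg c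
    nlinarith [abs_nonneg (deriv Lg (c * x + d)), abs_nonneg c]
  · rw [hder2]
    rw [abs_mul, abs_mul]
    have := abs_ddLg_le (c * x + d)
    have h1 : |c| * |c| = c ^ 2 := by rw [← abs_mul, abs_of_nonneg (by nlinarith [sq_nonneg c] : (0:ℝ) ≤ c * c)]; ring
    nlinarith [abs_nonneg (deriv (deriv Lg) (c * x + d)), abs_nonneg c, sq_nonneg c]

private lemma tendsto_Lg_atBot : Tendsto Lg atBot (𝓝 1) := by
  have : Tendsto (fun x => 1 + Real.exp x) atBot (𝓝 (1 + 0)) :=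
    tendsto_const_nhds.add Real.tendsto_exp_atBot
  have h := this.inv₀ (by norm_num)
  simp only [add_zero, inv_one] at h; exact h

private lemma tendsto_Lg_atTop : Tendsto Lg atTop (𝓝 0) := by
  have : Tendsto (fun x => 1 + Real.exp x) atTop atTop :=
    tendsto_atTop_add_const_left _ 1 Real.tendsto_exp_atTop
  exact this.inv_tendsto_atTop

private lemma tendsto_Lg_indicator (a x : ℝ) :
    Tendsto (fun n : ℕ => Lg ((n:ℝ)^2 * (x - a) - n)) atTop
      (𝓝 ((Iic a).indicator (fun _ => (1:ℝ)) x)) := by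
  by_cases hx : x ≤ a
  · rw [indicator_of_mem (mem_Iic.2 hx)]
    refine tendsto_Lg_atBot.comp ?_
    refine tendsto_atBot_mono (f := fun n : ℕ => (-(n:ℝ))) ?_ ?_
    · intro n
      have h1 : (n:ℝ)^2 * (x - a) ≤ 0 := by nlinarith [sq_nonneg (n:ℝ)]
      show (n:ℝ)^2 * (x - a) - n ≤ -(n:ℝ)
      linarith
    · exact tendsto_neg_atBot_iff.2 tendsto_natCast_atTop_atTop
  · push_neg at hx
    rw [indicator_of_notMem (by simpa using hx)]
    refine tendsto_Lg_atTop.comp ?_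
    apply tendsto_atTop_mono' atTop (f₁ := fun n : ℕ => (n:ℝ))
    · have hev : ∀ᶠ n : ℕ in atTop, (2:ℝ)/(x - a) ≤ (n:ℝ) :=
        tendsto_natCast_atTop_atTop.eventually_ge_atTop _
      filter_upwards [hev] with n hn
      have hxa : (0:ℝ) < x - a := by linarith
      have h2 : (2:ℝ) ≤ (n:ℝ) * (x - a) := by
        rw [div_le_iff₀ hxa] at hn; linarith
      have hn0 : (0:ℝ) ≤ (n:ℝ) := Nat.cast_nonneg n
      nlinarith
    · exact tendsto_natCast_atTop_atTop

end Logistic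



private lemma measurable_indicator_of_continuousOn {φ : ℝ → ℝ} {S : Set ℝ}
    (hS : MeasurableSet S) (hφ : ContinuousOn φ S) : Measurable (S.indicator φ) := by
  apply measurable_of_isOpen
  intro U hU
  obtain ⟨V, hV, hVeq⟩ := continuousOn_iff'.1 hφ U hU
  by_cases h0 : (0:ℝ) ∈ U
  · have heq : S.indicator φ ⁻¹' U = (V ∩ S) ∪ Sᶜ := by
      ext x
      by_cases hx : x ∈ S
      · have : x ∈ φ ⁻¹' U ↔ x ∈ V := by
          constructor
          · intro h; exact ((hVeq ▸ (mem_inter h hx)) : x ∈ V ∩ S).1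
          · intro h; exact ((hVeq.symm ▸ (mem_inter h hx)) : x ∈ φ ⁻¹' U ∩ S).1
        simp only [mem_preimage] at this
        simp [indicator_of_mem hx, hx, this]
      · simp [indicator_of_notMem hx, hx, h0]
    rw [heq]
    exact ((hV.measurableSet.inter hS).union hS.compl)
  · have heq : S.indicator φ ⁻¹' U = V ∩ S := by
      ext x
      by_cases hx : x ∈ S
      · have : x ∈ φ ⁻¹' U ↔ x ∈ V := by
          constructor
          · intro h; exact ((hVeq ▸ (mem_inter h hx)) : x ∈ V ∩ S).1
          · intro h; exact ((hVeq.symm ▸ (mem_inter h hx)) : x ∈ φ ⁻¹' U ∩ S).1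
        simp only [mem_preimage] at this
        simp [indicator_of_mem hx, hx, this]
      · simp [indicator_of_notMem hx, hx, h0]
    rw [heq]
    exact hV.measurableSet.inter hS

private lemma measurable_primitive (h : ℝ → ℝ) :
    Measurable (fun t => ∫ s in (0:ℝ)..t, h s) := by
  set S : Set ℝ := {t | IntervalIntegrable h volume 0 t} with hSdef
  have h0S : (0:ℝ) ∈ S := by
    simp only [hSdef, mem_setOf_eq]
    exact IntervalIntegrable.refl
  have hmono : ∀ t ∈ S, ∀ u, u ∈ uIcc 0 t → u ∈ S := by
    intro t ht u hu
    exact ht.mono_set (uIcc_subset_uIcc left_mem_uIcc hu)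
  have hS : S.OrdConnected := by
    constructor
    intro t1 ht1 t2 ht2 u hu
    rcases le_total 0 u with h0u | hu0
    · refine hmono t2 ht2 u ⟨le_trans (min_le_left _ _) h0u, le_trans hu.2 (le_max_right _ _)⟩
    · refine hmono t1 ht1 u ⟨le_trans (min_le_right _ _) hu.1, le_trans hu0 (le_max_left _ _)⟩
  have hcont : ContinuousOn (fun t => ∫ s in (0:ℝ)..t, h s) S := by
    intro t₀ ht₀
    obtain ⟨w₂, r, hw₂S, hle₂, hrt, hsub₂⟩ :
        ∃ w₂ r, w₂ ∈ S ∧ t₀ ≤ w₂ ∧ t₀ < r ∧ ∀ u ∈ S, u < r → u ≤ w₂ := by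
      by_cases hR : (S ∩ Ioi t₀).Nonempty
      · obtain ⟨w, hwS, hwt⟩ := hR
        exact ⟨w, w, hwS, le_of_lt hwt, hwt, fun u _ hlt => le_of_lt hlt⟩
      · refine ⟨t₀, t₀ + 1, ht₀, le_refl _, by linarith, fun u huS _ => ?_⟩
        by_contra hc
        push_neg at hc
        exact hR ⟨u, huS, hc⟩
    obtain ⟨w₁, l, hw₁S, hle₁, hlt, hsub₁⟩ :
        ∃ w₁ l, w₁ ∈ S ∧ w₁ ≤ t₀ ∧ l < t₀ ∧ ∀ u ∈ S, l < u → w₁ ≤ u := by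
      by_cases hL : (S ∩ Iio t₀).Nonempty
      · obtain ⟨w, hwS, hwt⟩ := hL
        exact ⟨w, w, hwS, le_of_lt hwt, hwt, fun u _ hlt' => le_of_lt hlt'⟩
      · refine ⟨t₀, t₀ - 1, ht₀, le_refl _, by linarith, fun u huS _ => ?_⟩
        by_contra hc
        push_neg at hc
        exact hL ⟨u, huS, hc⟩
    have hint : IntervalIntegrable h volume (min 0 w₁) (max 0 w₂) := by
      rw [intervalIntegrable_iff]
      have hsub : Ι (min 0 w₁) (max 0 w₂) ⊆ Ι 0 w₁ ∪ Ι 0 w₂ := by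
        intro x hx
        rw [Set.mem_uIoc] at hx
        rw [Set.mem_union, Set.mem_uIoc, Set.mem_uIoc]
        rcases hx with ⟨h1, h2⟩ | ⟨h1, h2⟩
        · rcases le_or_gt x 0 with hx0 | hx0
          · left; right
            constructor
            · rcases min_cases 0 w₁ with ⟨he, _⟩ | ⟨he, _⟩ <;> rw [he] at h1 <;> linarith
            · exact hx0
          · right; left
            constructor
            · exact hx0
            · rcases max_cases 0 w₂ with ⟨he, _⟩ | ⟨he, _⟩ <;> rw [he] at h2 <;> linarith
        · exfalso
          have : min 0 w₁ ≤ max 0 w₂ :=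
            le_trans (min_le_left _ _) (le_max_left _ _)
          linarith
      refine MeasureTheory.IntegrableOn.mono_set ?_ hsub
      exact MeasureTheory.IntegrableOn.union
        (intervalIntegrable_iff.1 hw₁S) (intervalIntegrable_iff.1 hw₂S)
    have hc : ContinuousWithinAt (fun t => ∫ s in (0:ℝ)..t, h s) (Icc w₁ w₂) t₀ :=
      intervalIntegral.continuousWithinAt_primitive (by simp) hint
    refine Filter.Tendsto.mono_left hc ?_
    calc 𝓝[S] t₀ = 𝓝[S ∩ Ioo l r] t₀ :=
          nhdsWithin_restrict' S (Ioo_mem_nhds hlt hrt)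
      _ ≤ 𝓝[Icc w₁ w₂] t₀ := by
          apply nhdsWithin_mono
          rintro u ⟨huS, hul, hur⟩
          exact ⟨hsub₁ u huS hul, hsub₂ u huS hur⟩
  have heq : (fun t => ∫ s in (0:ℝ)..t, h s) =
      S.indicator (fun t => ∫ s in (0:ℝ)..t, h s) := by
    funext t
    by_cases ht : t ∈ S
    · rw [indicator_of_mem ht]
    · rw [indicator_of_notMem ht, intervalIntegral.integral_undef ht]
  rw [heq]
  exact measurable_indicator_of_continuousOn hS.measurableSet hcont


private lemma integrable_of_bdd {ν : Measure ℝ} [IsFiniteMeasure ν] {h : ℝ → ℝ} {C : ℝ}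
    (hm : AEStronglyMeasurable h ν) (hb : ∀ x, |h x| ≤ C) : Integrable h ν :=
  Integrable.mono' (integrable_const C) hm (Eventually.of_forall (fun x => by
    rw [Real.norm_eq_abs]; exact hb x))

private lemma integrable_linear_growth {ν : Measure ℝ} [IsFiniteMeasure ν]
    (hmom : Integrable (fun y => |y|) ν) {k : ℝ → ℝ} {A B : ℝ}
    (hmeas : AEStronglyMeasurable k ν) (hb : ∀ y, |k y| ≤ A + B * |y|) :
    Integrable k ν :=
  Integrable.mono' ((integrable_const A).add (hmom.const_mul B)) hmeas
    (Eventually.of_forall (fun x => by rw [Real.norm_eq_abs]; exact hb x))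

private lemma integral_abs_eval {ν : Measure ℝ} [IsProbabilityMeasure ν]
    (hmom : Integrable (fun y => |y|) ν) (x : ℝ) :
    ∫ y, (|x| + |y|) ∂ν = |x| + ∫ y, |y| ∂ν := by
  rw [integral_add (integrable_const _) hmom, integral_const]
  simp

private lemma abs_integral_linear_growth {ν : Measure ℝ} [IsProbabilityMeasure ν]
    (hmom : Integrable (fun y => |y|) ν) {k : ℝ → ℝ} {C : ℝ} (x : ℝ)
    (hb : ∀ y, |k y| ≤ C * (|x| + |y|)) :
    |∫ y, k y ∂ν| ≤ C * |x| + C * ∫ y, |y| ∂ν := by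
  have h1 : |∫ y, k y ∂ν| ≤ ∫ y, C * (|x| + |y|) ∂ν := by
    rw [← Real.norm_eq_abs]
    refine norm_integral_le_of_norm_le ?_ (Eventually.of_forall (fun y => by
      rw [Real.norm_eq_abs]; exact hb y))
    exact ((integrable_const _).add hmom).const_mul C
  calc |∫ y, k y ∂ν| ≤ ∫ y, C * (|x| + |y|) ∂ν := h1
    _ = C * (|x| + ∫ y, |y| ∂ν) := by simp only [← smul_eq_mul, integral_smul]; rw [integral_abs_eval hmom]
    _ = C * |x| + C * ∫ y, |y| ∂ν := by ring

private lemma integrable_dirac0 {h : ℝ → ℝ} (hsm : StronglyMeasurable h) :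
    Integrable h (Measure.dirac (0:ℝ)) := by
  refine ⟨hsm.aestronglyMeasurable, ?_⟩
  rw [HasFiniteIntegral, lintegral_dirac (0:ℝ) (fun a => ‖h a‖ₑ)]
  exact enorm_lt_top

/-- Integral against the three-component mixture. -/
private lemma integral_mixture {ν₁ ν₂ : Measure ℝ} [IsFiniteMeasure ν₁] [IsFiniteMeasure ν₂]
    {lam γ lamS : ℝ} (hlam : 0 ≤ lam) (hγ : 0 ≤ γ) (hlamS : 0 ≤ lamS)
    {h : ℝ → ℝ} (hsm : StronglyMeasurable h)
    (h₁ : Integrable h ν₁) (h₂ : Integrable h ν₂) :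
    ∫ x, h x ∂(ENNReal.ofReal lam • ν₁ + ENNReal.ofReal γ • Measure.dirac (0:ℝ)
        + ENNReal.ofReal lamS • ν₂)
      = lam * ∫ x, h x ∂ν₁ + γ * h 0 + lamS * ∫ x, h x ∂ν₂ := by
  have hd : Integrable h (Measure.dirac (0:ℝ)) := integrable_dirac0 hsm
  have hne : ∀ c : ℝ, ENNReal.ofReal c ≠ ⊤ := fun c => ENNReal.ofReal_ne_top
  have i1 : Integrable h (ENNReal.ofReal lam • ν₁) := h₁.smul_measure (hne lam)
  have i2 : Integrable h (ENNReal.ofReal γ • Measure.dirac (0:ℝ)) := hd.smul_measure (hne γ)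
  have i3 : Integrable h (ENNReal.ofReal lamS • ν₂) := h₂.smul_measure (hne lamS)
  rw [integral_add_measure (i1.add_measure i2) i3, integral_add_measure i1 i2]
  rw [integral_smul_measure, integral_smul_measure, integral_smul_measure]
  rw [integral_dirac h 0]
  rw [ENNReal.toReal_ofReal hlam, ENNReal.toReal_ofReal hγ, ENNReal.toReal_ofReal hlamS]
  simp [smul_eq_mul]

private lemma integral_sub_const {ν : Measure ℝ} [IsProbabilityMeasure ν] {F : ℝ → ℝ}
    (hF : Integrable F ν) (c : ℝ) : ∫ x, (F x - c) ∂ν = (∫ x, F x ∂ν) - c := by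
  rw [integral_sub hF (integrable_const c), integral_const]; simp

private lemma integral_const_sub {ν : Measure ℝ} [IsProbabilityMeasure ν] {F : ℝ → ℝ}
    (hF : Integrable F ν) (c : ℝ) : ∫ x, (c - F x) ∂ν = c - ∫ x, F x ∂ν := by
  rw [integral_sub (integrable_const c) hF, integral_const]; simp

private lemma integral_comb3 {ν : Measure ℝ} {F G K : ℝ → ℝ} (a b c : ℝ)
    (hF : Integrable F ν) (hG : Integrable G ν) (hK : Integrable K ν) :
    ∫ x, (a * F x + b * G x + c * K x) ∂ν
      = a * ∫ x, F x ∂ν + b * ∫ x, G x ∂ν + c * ∫ x, K x ∂ν := by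
  have h1 : Integrable (fun x => a * F x + b * G x) ν := (hF.const_mul a).add (hG.const_mul b)
  rw [integral_add h1 (hK.const_mul c), integral_add (hF.const_mul a) (hG.const_mul b)]
  simp only [← smul_eq_mul, integral_smul]

section BigLemma

private lemma double_integral_mixture
    (f : ℝ → ℝ) (hf : CbTwo f)
    {lam γ lamS : ℝ} (hlam : 0 ≤ lam) (hγ : 0 ≤ γ) (hlamS : 0 ≤ lamS)
    (ν₁ η₁ : Measure ℝ) [IsProbabilityMeasure ν₁] [IsProbabilityMeasure η₁]
    (hpos₁ : ∀ᵐ x ∂ν₁, 0 < x) (hpos₂ : ∀ᵐ x ∂η₁, 0 < x)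
    (hm₁ : Integrable (fun x => |x|) ν₁) (hm₂ : Integrable (fun x => |x|) η₁) :
    (∫ x, ∫ y, deltaF f x y * (|x| + |y|)
        ∂(ENNReal.ofReal lam • ν₁ + ENNReal.ofReal γ • Measure.dirac (0:ℝ)
          + ENNReal.ofReal lamS • (Measure.map (fun x : ℝ => -x) η₁))
        ∂(ENNReal.ofReal lam • ν₁ + ENNReal.ofReal γ • Measure.dirac (0:ℝ)
          + ENNReal.ofReal lamS • (Measure.map (fun x : ℝ => -x) η₁)))
      = lam^2 * (∫ x, ∫ y, deltaF f x y * (x + y) ∂ν₁ ∂ν₁)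
      + lamS^2 * (∫ x, ∫ y, deltaF (fun z => f (-z)) x y * (x + y) ∂η₁ ∂η₁)
      + 2*lam*(lamS + γ) * (∫ x, deriv f x ∂ν₁)
      + 2*lamS*(lam + γ) * (∫ x, deriv (fun z => f (-z)) x ∂η₁)
      + 2*γ*(lamS - lam) * (deriv f 0) := by
  have hnegm : Measurable (fun x : ℝ => -x) := measurable_neg
  set ν₂ : Measure ℝ := Measure.map (fun x : ℝ => -x) η₁ with hν₂
  haveI : IsProbabilityMeasure ν₂ := Measure.isProbabilityMeasure_map hnegm.aemeasurable
  have hm₂' : Integrable (fun x => |x|) ν₂ := by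
    rw [hν₂, integrable_map_measure measurable_abs.aestronglyMeasurable hnegm.aemeasurable]
    have : (abs ∘ fun x : ℝ => -x) = fun x : ℝ => |x| := by
      funext x; simp
    rw [show ((fun x : ℝ => |x|) ∘ fun x : ℝ => -x) = fun x : ℝ => |x| from by funext x; simp]
    exact hm₂
  have hpos₂' : ∀ᵐ x ∂ν₂, x < 0 := by
    rw [hν₂, ae_map_iff hnegm.aemeasurable (measurableSet_Iio (a := (0:ℝ)))]
    filter_upwards [hpos₂] with x hx
    simpa using hx
  obtain ⟨hcd, C, hC⟩ := hf
  have hf' : CbTwo f := ⟨hcd, C, hC⟩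
  have hC0 : 0 ≤ C := le_trans (abs_nonneg _) (hC 0).1
  have hCd : ∀ x y, |deltaF f x y| ≤ C := abs_deltaF_le hf' (fun x => (hC x).2.2)
  have hkb : ∀ x y, |deltaF f x y * (|x| + |y|)| ≤ C * (|x| + |y|) := by
    intro x y
    rw [abs_mul, abs_of_nonneg (by positivity : (0:ℝ) ≤ |x| + |y|)]
    exact mul_le_mul_of_nonneg_right (hCd x y) (by positivity)
  have hkb' : ∀ x y, |deltaF f x y * (|x| + |y|)| ≤ C * |x| + C * |y| := by
    intro x y; have := hkb x y; nlinarith [abs_nonneg x, abs_nonneg y]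
  have hkm : Measurable (fun p : ℝ × ℝ => deltaF f p.1 p.2 * (|p.1| + |p.2|)) :=
    (measurable_deltaF_pair hf').mul ((measurable_fst.abs).add (measurable_snd.abs))
  have hkmx : ∀ x, Measurable (fun y => deltaF f x y * (|x| + |y|)) :=
    fun x => hkm.comp (measurable_prodMk_left)
  -- integrability of the inner integrand
  have hIx : ∀ (ν : Measure ℝ) [IsProbabilityMeasure ν], Integrable (fun y => |y|) ν →
      ∀ x, Integrable (fun y => deltaF f x y * (|x| + |y|)) ν := by
    intro ν _ hmom x
    exact integrable_linear_growth (A := C * |x|) (B := C) hmom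
      ((hkmx x).aestronglyMeasurable) (fun y => hkb' x y)
  -- the inner integrals
  set I₁ : ℝ → ℝ := fun x => ∫ y, deltaF f x y * (|x| + |y|) ∂ν₁ with hI₁
  set I₂ : ℝ → ℝ := fun x => ∫ y, deltaF f x y * (|x| + |y|) ∂ν₂ with hI₂
  have hI₁sm : StronglyMeasurable I₁ := by
    exact hkm.stronglyMeasurable.integral_prod_right'
  have hI₂sm : StronglyMeasurable I₂ := by
    exact hkm.stronglyMeasurable.integral_prod_right'
  set m₁ : ℝ := ∫ y, |y| ∂ν₁ with hm1def
  set m₂ : ℝ := ∫ y, |y| ∂ν₂ with hm2def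
  have hI₁b : ∀ x, |I₁ x| ≤ C * |x| + C * m₁ := fun x =>
    abs_integral_linear_growth hm₁ x (hkb x)
  have hI₂b : ∀ x, |I₂ x| ≤ C * |x| + C * m₂ := fun x =>
    abs_integral_linear_growth hm₂' x (hkb x)
  have hk0b : ∀ x, |deltaF f x 0 * (|x| + |(0:ℝ)|)| ≤ C * |x| := by
    intro x; have := hkb x 0; simpa using this
  -- the mixture measure
  set μm : Measure ℝ := ENNReal.ofReal lam • ν₁ + ENNReal.ofReal γ • Measure.dirac (0:ℝ)
      + ENNReal.ofReal lamS • ν₂ with hμm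
  -- inner expansion
  have hμinner : (fun x => ∫ y, deltaF f x y * (|x| + |y|) ∂μm)
      = fun x => lam * I₁ x + γ * (deltaF f x 0 * (|x| + |(0:ℝ)|)) + lamS * I₂ x := by
    funext x
    exact integral_mixture hlam hγ hlamS (hkmx x).stronglyMeasurable
      (hIx ν₁ hm₁ x) (hIx ν₂ hm₂' x)
  set H : ℝ → ℝ := fun x => lam * I₁ x + γ * (deltaF f x 0 * (|x| + |(0:ℝ)|)) + lamS * I₂ x
    with hH
  have hk0m : Measurable (fun x => deltaF f x 0 * (|x| + |(0:ℝ)|)) :=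
    hkm.comp (measurable_id.prodMk measurable_const)
  have hHm : Measurable H :=
    ((hI₁sm.measurable.const_mul lam).add (hk0m.const_mul γ)).add
      (hI₂sm.measurable.const_mul lamS)
  have hHb : ∀ x, |H x| ≤ (lam * (C * m₁) + lamS * (C * m₂)) + ((lam + γ + lamS) * C) * |x| := by
    intro x
    have h1 := hI₁b x
    have h2 := hI₂b x
    have h3 := hk0b x
    have e1 : |H x| ≤ lam * |I₁ x| + γ * |deltaF f x 0 * (|x| + |(0:ℝ)|)| + lamS * |I₂ x| := by
      rw [hH]
      calc |lam * I₁ x + γ * (deltaF f x 0 * (|x| + |(0:ℝ)|)) + lamS * I₂ x|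
          ≤ |lam * I₁ x + γ * (deltaF f x 0 * (|x| + |(0:ℝ)|))| + |lamS * I₂ x| := abs_add_le _ _
        _ ≤ |lam * I₁ x| + |γ * (deltaF f x 0 * (|x| + |(0:ℝ)|))| + |lamS * I₂ x| := by
            have := abs_add_le (lam * I₁ x) (γ * (deltaF f x 0 * (|x| + |(0:ℝ)|)))
            linarith
        _ = lam * |I₁ x| + γ * |deltaF f x 0 * (|x| + |(0:ℝ)|)| + lamS * |I₂ x| := by
            rw [abs_mul lam, abs_mul γ, abs_mul lamS, abs_of_nonneg hlam, abs_of_nonneg hγ,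
              abs_of_nonneg hlamS]
    nlinarith [abs_nonneg (I₁ x), abs_nonneg (I₂ x),
      abs_nonneg (deltaF f x 0 * (|x| + |(0:ℝ)|)), abs_nonneg x]
  have hHint : ∀ (ν : Measure ℝ) [IsProbabilityMeasure ν], Integrable (fun y => |y|) ν →
      Integrable H ν := by
    intro ν _ hmom
    exact integrable_linear_growth (A := lam * (C * m₁) + lamS * (C * m₂))
      (B := (lam + γ + lamS) * C) hmom hHm.aestronglyMeasurable hHb
  -- expand the outer integral
  rw [show (∫ x, ∫ y, deltaF f x y * (|x| + |y|) ∂μm ∂μm) = ∫ x, H x ∂μm by rw [hμinner] ]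
  rw [hμm]
  rw [integral_mixture hlam hγ hlamS hHm.stronglyMeasurable (hHint ν₁ hm₁) (hHint ν₂ hm₂')]
  -- integrability of pieces
  have hdfc : Continuous (deriv f) := cb_cont1 hf'
  have hdfν₁ : Integrable (deriv f) ν₁ :=
    integrable_of_bdd hdfc.measurable.aestronglyMeasurable (fun x => (hC x).2.1)
  have hdfν₂ : Integrable (deriv f) ν₂ :=
    integrable_of_bdd hdfc.measurable.aestronglyMeasurable (fun x => (hC x).2.1)
  have hI₁int : ∀ (ν : Measure ℝ) [IsProbabilityMeasure ν], Integrable (fun y => |y|) ν →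
      Integrable I₁ ν := by
    intro ν _ hmom
    exact integrable_linear_growth (A := C * m₁) (B := C) hmom hI₁sm.aestronglyMeasurable
      (fun x => by have := hI₁b x; linarith)
  have hI₂int : ∀ (ν : Measure ℝ) [IsProbabilityMeasure ν], Integrable (fun y => |y|) ν →
      Integrable I₂ ν := by
    intro ν _ hmom
    exact integrable_linear_growth (A := C * m₂) (B := C) hmom hI₂sm.aestronglyMeasurable
      (fun x => by have := hI₂b x; linarith)
  have hk0int : ∀ (ν : Measure ℝ) [IsProbabilityMeasure ν], Integrable (fun y => |y|) ν →
      Integrable (fun x => deltaF f x 0 * (|x| + |(0:ℝ)|)) ν := by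
    intro ν _ hmom
    exact integrable_linear_growth (A := 0) (B := C) hmom hk0m.aestronglyMeasurable
      (fun x => by have := hk0b x; linarith)
  -- expand ∫ H over the three component measures
  rw [show H 0 = lam * I₁ 0 + γ * (deltaF f 0 0 * (|(0:ℝ)| + |(0:ℝ)|)) + lamS * I₂ 0 from rfl]
  rw [show (∫ x, H x ∂ν₁) = lam * (∫ x, I₁ x ∂ν₁)
      + γ * (∫ x, deltaF f x 0 * (|x| + |(0:ℝ)|) ∂ν₁) + lamS * (∫ x, I₂ x ∂ν₁) from
    integral_comb3 lam γ lamS (hI₁int ν₁ hm₁) (hk0int ν₁ hm₁) (hI₂int ν₁ hm₁)]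
  rw [show (∫ x, H x ∂ν₂) = lam * (∫ x, I₁ x ∂ν₂)
      + γ * (∫ x, deltaF f x 0 * (|x| + |(0:ℝ)|) ∂ν₂) + lamS * (∫ x, I₂ x ∂ν₂) from
    integral_comb3 lam γ lamS (hI₁int ν₂ hm₂') (hk0int ν₂ hm₂') (hI₂int ν₂ hm₂')]
  -- abbreviations
  set P1 : ℝ := ∫ x, deriv f x ∂ν₁ with hP1
  set Q1 : ℝ := ∫ x, deriv (fun z => f (-z)) x ∂η₁ with hQ1
  set R1 : ℝ := ∫ x, deriv f x ∂ν₂ with hR1def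
  set d0 : ℝ := deriv f 0 with hd0
  -- term evaluations
  have hE2 : ∫ x, deltaF f x 0 * (|x| + |(0:ℝ)|) ∂ν₁ = P1 - d0 := by
    have hcong : ∀ᵐ x ∂ν₁, deltaF f x 0 * (|x| + |(0:ℝ)|) = deriv f x - deriv f 0 := by
      filter_upwards [hpos₁] with x hx
      have h1 : |x| + |(0:ℝ)| = x - 0 := by rw [abs_of_pos hx, abs_zero]; ring
      rw [h1, deltaF_mul_sub]
    rw [integral_congr_ae hcong, integral_sub_const hdfν₁]
  have hE1 : ∫ x, I₁ x ∂ν₁ = ∫ x, ∫ y, deltaF f x y * (x + y) ∂ν₁ ∂ν₁ := by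
    apply integral_congr_ae
    filter_upwards [hpos₁] with x hx
    simp only [hI₁]
    apply integral_congr_ae
    filter_upwards [hpos₁] with y hy
    rw [abs_of_pos hx, abs_of_pos hy]
  have hE3 : ∫ x, I₂ x ∂ν₁ = P1 - R1 := by
    have hcong : ∀ᵐ x ∂ν₁, I₂ x = deriv f x - R1 := by
      filter_upwards [hpos₁] with x hx
      have hin : I₂ x = ∫ y, (deriv f x - deriv f y) ∂ν₂ := by
        simp only [hI₂]
        apply integral_congr_ae
        filter_upwards [hpos₂'] with y hy
        have h1 : |x| + |y| = x - y := by rw [abs_of_pos hx, abs_of_neg hy]; ring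
        rw [h1, deltaF_mul_sub]
      rw [hin, integral_const_sub hdfν₂]
    rw [integral_congr_ae hcong, integral_sub_const hdfν₁]
  have hE4 : I₁ 0 = P1 - d0 := by
    simp only [hI₁]
    have hcong : ∀ᵐ y ∂ν₁, deltaF f 0 y * (|(0:ℝ)| + |y|) = deriv f y - deriv f 0 := by
      filter_upwards [hpos₁] with y hy
      have h0 := deltaF_mul_sub f 0 y
      have h1 : |(0:ℝ)| + |y| = y := by rw [abs_zero, abs_of_pos hy]; ring
      rw [h1]
      linear_combination (-1 : ℝ) * h0
    rw [integral_congr_ae hcong, integral_sub_const hdfν₁]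
  have hE5 : I₂ 0 = d0 - R1 := by
    simp only [hI₂]
    have hcong : ∀ᵐ y ∂ν₂, deltaF f 0 y * (|(0:ℝ)| + |y|) = deriv f 0 - deriv f y := by
      filter_upwards [hpos₂'] with y hy
      have h1 : |(0:ℝ)| + |y| = 0 - y := by rw [abs_zero, abs_of_neg hy]; ring
      rw [h1, deltaF_mul_sub]
    rw [integral_congr_ae hcong, integral_const_sub hdfν₂]
  have hE6 : ∫ x, I₁ x ∂ν₂ = P1 - R1 := by
    have hcong : ∀ᵐ x ∂ν₂, I₁ x = P1 - deriv f x := by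
      filter_upwards [hpos₂'] with x hx
      have hin : I₁ x = ∫ y, (deriv f y - deriv f x) ∂ν₁ := by
        simp only [hI₁]
        apply integral_congr_ae
        filter_upwards [hpos₁] with y hy
        have h0 := deltaF_mul_sub f x y
        have h1 : |x| + |y| = y - x := by rw [abs_of_neg hx, abs_of_pos hy]; ring
        rw [h1]
        linear_combination (-1 : ℝ) * h0
      rw [hin, integral_sub_const hdfν₁]
    rw [integral_congr_ae hcong, integral_const_sub hdfν₂]
  have hE7 : ∫ x, deltaF f x 0 * (|x| + |(0:ℝ)|) ∂ν₂ = d0 - R1 := by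
    have hcong : ∀ᵐ x ∂ν₂, deltaF f x 0 * (|x| + |(0:ℝ)|) = deriv f 0 - deriv f x := by
      filter_upwards [hpos₂'] with x hx
      have h0 := deltaF_mul_sub f x 0
      have h1 : |x| + |(0:ℝ)| = -x := by rw [abs_of_neg hx, abs_zero]; ring
      rw [h1]
      linear_combination (-1 : ℝ) * h0
    rw [integral_congr_ae hcong, integral_const_sub hdfν₂]
  have hE8 : ∫ x, I₂ x ∂ν₂ = ∫ x, ∫ y, deltaF (fun z => f (-z)) x y * (x + y) ∂η₁ ∂η₁ := by
    have step1 : ∀ᵐ x ∂ν₂, I₂ x = ∫ y, deltaF f x y * (-x - y) ∂ν₂ := by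
      filter_upwards [hpos₂'] with x hx
      simp only [hI₂]
      apply integral_congr_ae
      filter_upwards [hpos₂'] with y hy
      rw [abs_of_neg hx, abs_of_neg hy]
      ring
    rw [integral_congr_ae step1]
    have hinm : Measurable (fun p : ℝ × ℝ => deltaF f p.1 p.2 * (-p.1 - p.2)) :=
      (measurable_deltaF_pair hf').mul ((measurable_fst.neg).sub measurable_snd)
    have step2 : ∀ x, ∫ y, deltaF f x y * (-x - y) ∂ν₂ = ∫ u, deltaF f x (-u) * (-x + u) ∂η₁ := by
      intro x
      have hmx : Measurable fun y => deltaF f x y * (-x - y) :=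
        hinm.comp measurable_prodMk_left
      rw [hν₂, integral_map hnegm.aemeasurable hmx.aestronglyMeasurable]
      apply integral_congr_ae
      apply Eventually.of_forall
      intro u
      ring
    rw [integral_congr_ae (Eventually.of_forall step2)]
    have houtm : Measurable (fun x => ∫ u, deltaF f x (-u) * (-x + u) ∂η₁) := by
      have hm0 : Measurable (fun p : ℝ × ℝ => deltaF f p.1 (-p.2) * (-p.1 + p.2)) :=
        ((measurable_deltaF_pair hf').comp
          (measurable_fst.prodMk measurable_snd.neg)).mul
          ((measurable_fst.neg).add measurable_snd)
      exact hm0.stronglyMeasurable.integral_prod_right'.measurable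
    rw [hν₂, integral_map hnegm.aemeasurable houtm.aestronglyMeasurable]
    apply integral_congr_ae
    apply Eventually.of_forall
    intro v
    apply integral_congr_ae
    apply Eventually.of_forall
    intro u
    show deltaF f (-v) (-u) * (- -v + u) = deltaF (fun z => f (-z)) v u * (v + u)
    rw [deltaF_negcomp f v u]
    ring
  have hE00 : deltaF f 0 0 * (|(0:ℝ)| + |(0:ℝ)|) = 0 := by simp
  have hR1Q : R1 = -Q1 := by
    rw [hR1def, hν₂, integral_map hnegm.aemeasurable hdfc.measurable.aestronglyMeasurable]
    rw [hQ1]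
    simp only [deriv_negcomp f]
    rw [integral_neg]
    ring
  rw [hE1, hE2, hE3, hE4, hE5, hE6, hE7, hE8, hE00, hR1Q]
  ring

end BigLemma
section Kernels
open ProbabilityTheory

private lemma measurable_double_integral {κfun : ℝ → Measure ℝ} (hκ : Measurable κfun)
    (hp : ∀ u, IsProbabilityMeasure (κfun u))
    {k : ℝ × ℝ → ℝ} (hk : Measurable k) :
    Measurable (fun u => ∫ x, ∫ y, k (x, y) ∂(κfun u) ∂(κfun u)) := by
  set κ : Kernel ℝ ℝ := ⟨κfun, hκ⟩ with hκdef
  haveI : IsMarkovKernel κ := ⟨fun u => hp u⟩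
  have h1 : StronglyMeasurable (fun p : ℝ × ℝ => ∫ y, k (p.2, y) ∂(κfun p.1)) := by
    have hsm : StronglyMeasurable (fun q : (ℝ × ℝ) × ℝ => k (q.1.2, q.2)) :=
      (hk.comp ((measurable_fst.snd).prodMk measurable_snd)).stronglyMeasurable
    have := hsm.integral_kernel_prod_right' (κ := κ.comap Prod.fst measurable_fst)
    exact this
  have h2 := h1.integral_kernel_prod_right' (κ := κ)
  exact h2.measurable

private lemma measurable_single_integral {κfun : ℝ → Measure ℝ} (hκ : Measurable κfun)
    (hp : ∀ u, IsProbabilityMeasure (κfun u))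
    {h : ℝ → ℝ} (hh : Measurable h) : Measurable (fun u => ∫ x, h x ∂(κfun u)) := by
  set κ : Kernel ℝ ℝ := ⟨κfun, hκ⟩ with hκdef
  haveI : IsMarkovKernel κ := ⟨fun u => hp u⟩
  have hsm : StronglyMeasurable (fun q : ℝ × ℝ => h q.2) :=
    (hh.comp measurable_snd).stronglyMeasurable
  exact (hsm.integral_kernel_prod_right' (κ := κ)).measurable

private lemma continuous_Lg : Continuous Lg :=
  (continuous_const.add Real.continuous_exp).inv₀ (fun x => (Lg_den_pos x).ne')

private lemma measurable_family (ν : ℝ → Measure ℝ)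
    (hprob : ∀ t, IsProbabilityMeasure (ν t))
    (hm : ∀ h : ℝ → ℝ, CbTwo h → Measurable (fun u => ∫ x, h x ∂(ν (max u 0)))) :
    Measurable (fun u => ν (max u 0)) := by
  apply Measure.measurable_of_measurable_coe
  intro A hA
  refine MeasurableSpace.induction_on_inter
    (C := fun A _ => Measurable fun u => (ν (max u 0)) A)
    (borel_eq_generateFrom_Iic ℝ) isPiSystem_Iic ?_ ?_ ?_ ?_ A hA
  · simp only [measure_empty]; exact measurable_const
  · rintro A ⟨a, rfl⟩
    have key : ∀ u, Tendsto (fun n : ℕ => ∫ x, Lg ((n:ℝ)^2 * (x - a) - n) ∂(ν (max u 0)))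
        atTop (𝓝 ((ν (max u 0) (Iic a)).toReal)) := by
      intro u
      haveI := hprob (max u 0)
      have hcontn : ∀ n : ℕ, Continuous (fun x => Lg ((n:ℝ)^2 * (x - a) - n)) := fun n =>
        continuous_Lg.comp (((continuous_const.mul (continuous_id.sub continuous_const)).sub
          continuous_const))
      have hlim := tendsto_integral_of_dominated_convergence (μ := ν (max u 0))
        (F := fun n x => Lg ((n:ℝ)^2 * (x - a) - n))
        (f := (Iic a).indicator (fun _ => (1:ℝ))) (bound := fun _ => 1)
        (fun n => (hcontn n).aestronglyMeasurable) (integrable_const 1)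
        (fun n => Eventually.of_forall (fun x => by rw [Real.norm_eq_abs]; exact abs_Lg_le _))
        (Eventually.of_forall (fun x => tendsto_Lg_indicator a x))
      rwa [integral_indicator_const (1:ℝ) measurableSet_Iic, smul_eq_mul, mul_one] at hlim
    have hFn : ∀ n : ℕ, Measurable (fun u => ∫ x, Lg ((n:ℝ)^2 * (x - a) - n) ∂(ν (max u 0))) := by
      intro n
      have heq : (fun x => Lg ((n:ℝ)^2 * (x - a) - n))
          = fun x => Lg ((n:ℝ)^2 * x + (-((n:ℝ)^2) * a - n)) := by
        funext x; ring_nf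
      rw [heq]
      exact hm _ (cbTwo_Lg_affine _ _)
    have hmeas0 : Measurable (fun u => (ν (max u 0) (Iic a)).toReal) :=
      measurable_of_tendsto_metrizable hFn (tendsto_pi_nhds.2 key)
    have heq2 : (fun u => ν (max u 0) (Iic a))
        = fun u => ENNReal.ofReal ((ν (max u 0) (Iic a)).toReal) := by
      funext u
      rw [ENNReal.ofReal_toReal (measure_ne_top _ _)]
    rw [heq2]
    exact hmeas0.ennreal_ofReal
  · intro A hAm hAmeas
    have heq3 : (fun u => ν (max u 0) Aᶜ) = fun u => 1 - ν (max u 0) A := by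
      funext u
      haveI := hprob (max u 0)
      rw [measure_compl hAm (measure_ne_top _ _), measure_univ]
    rw [heq3]
    exact measurable_const.sub hAmeas
  · intro g hdisj hgm hgmeas
    simp only [measure_iUnion hdisj hgm]
    exact Measurable.ennreal_tsum hgmeas

private lemma abs_integral_le_bdd {ν : Measure ℝ} [IsProbabilityMeasure ν] {h : ℝ → ℝ} {C : ℝ}
    (hb : ∀ x, |h x| ≤ C) : |∫ x, h x ∂ν| ≤ C := by
  have h1 : |∫ x, h x ∂ν| ≤ ∫ _x, C ∂ν := by
    rw [← Real.norm_eq_abs]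
    exact norm_integral_le_of_norm_le (integrable_const C)
      (Eventually.of_forall fun x => by rw [Real.norm_eq_abs]; exact hb x)
  rwa [integral_const, probReal_univ, one_smul] at h1

private lemma abs_double_integral_le {ν : Measure ℝ} [IsProbabilityMeasure ν]
    (hmom : Integrable (fun x => |x|) ν) {f : ℝ → ℝ} {C : ℝ} (hC0 : 0 ≤ C)
    (hf : CbTwo f) (hCd : ∀ x y, |deltaF f x y| ≤ C) :
    |∫ x, ∫ y, deltaF f x y * (x + y) ∂ν ∂ν| ≤ 2 * C * ∫ x, |x| ∂ν := by
  have hkb : ∀ x y, |deltaF f x y * (x + y)| ≤ C * (|x| + |y|) := by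
    intro x y
    rw [abs_mul]
    calc |deltaF f x y| * |x + y| ≤ C * |x + y| :=
          mul_le_mul_of_nonneg_right (hCd x y) (abs_nonneg _)
      _ ≤ C * (|x| + |y|) := mul_le_mul_of_nonneg_left (abs_add_le x y) hC0
  have hinb : ∀ x, |∫ y, deltaF f x y * (x + y) ∂ν| ≤ C * |x| + C * ∫ y, |y| ∂ν :=
    fun x => abs_integral_linear_growth hmom x (hkb x)
  have h1 : |∫ x, ∫ y, deltaF f x y * (x + y) ∂ν ∂ν|
      ≤ ∫ x, (C * ∫ y, |y| ∂ν + C * |x|) ∂ν := by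
    rw [← Real.norm_eq_abs]
    refine norm_integral_le_of_norm_le ?_ (Eventually.of_forall fun x => by
      rw [Real.norm_eq_abs]
      have := hinb x
      linarith)
    exact (integrable_const _).add (hmom.const_mul C)
  have h2 : ∫ x, (C * ∫ y, |y| ∂ν + C * |x|) ∂ν
      = C * (∫ y, |y| ∂ν) + C * ∫ x, |x| ∂ν := by
    rw [integral_add (integrable_const _) (hmom.const_mul C), integral_const]
    simp only [probReal_univ, one_smul]
    simp only [← smul_eq_mul, integral_smul]
  rw [h2] at h1
  linarith

private lemma intervalIntegrable_of_bdd {F : ℝ → ℝ} {t : ℝ} (ht : 0 ≤ t)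
    (hm : Measurable F) {C : ℝ} (hb : ∀ s ∈ Ioc (0:ℝ) t, |F s| ≤ C) :
    IntervalIntegrable F volume 0 t := by
  rw [intervalIntegrable_iff, uIoc_of_le ht]
  refine Integrable.mono' (g := fun _ => C) ?_ hm.aestronglyMeasurable.restrict ?_
  · exact integrableOn_const measure_Ioc_lt_top.ne
  · rw [ae_restrict_iff' measurableSet_Ioc]
    exact Eventually.of_forall fun s hs => by rw [Real.norm_eq_abs]; exact hb s hs

end Kernels
private lemma ae_pos_of_measure_Ioi {ν : Measure ℝ} [IsProbabilityMeasure ν]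
    (h : ν (Ioi 0) = 1) : ∀ᵐ x ∂ν, 0 < x := by
  have hc : ν (Ioi 0)ᶜ = 0 := (prob_compl_eq_zero_iff measurableSet_Ioi).2 h
  rw [ae_iff]
  convert hc using 2; ext x; simp


set_option maxHeartbeats 1000000 in
theorem stmt7 (αm αp : ℝ) (hαp : 1 < αp) (hord : αp ≤ αm)
    (lam lamStar γ α : ℝ)
    (hlam : lam = (αm - 1) / (αp * αm - 1))
    (hlamStar : lamStar = (αp - 1) / (αp * αm - 1))
    (hγ : γ = (αp - 1) * (αm - 1) / (αp * αm - 1))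
    (hα : α = (αm - αp) / (αp * αm - 1))
    (νp η : ℝ → Measure ℝ)
    (hprob : ∀ t, IsProbabilityMeasure (νp t) ∧ IsProbabilityMeasure (η t))
    (hνp0 : νp 0 = Measure.dirac 0) (hη0 : η 0 = Measure.dirac 0)
    (hνppos : ∀ t : ℝ, 0 < t → νp t (Ioi 0) = 1)
    (hηpos : ∀ t : ℝ, 0 < t → η t (Ioi 0) = 1)
    -- finite first moments, locally bounded in time
    (hint : ∀ t : ℝ, 0 ≤ t →
      Integrable (fun x => |x|) (νp t) ∧ Integrable (fun x => |x|) (η t))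
    (hbd : ∀ T > (0:ℝ), ∃ M : ℝ, ∀ t ∈ Icc (0:ℝ) T,
      ∫ x, |x| ∂(νp t) ≤ M ∧ ∫ x, |x| ∂(η t) ≤ M)
    -- `νp` solves the equation with drift `αp` and kernel x+y
    (heqp : ∀ f : ℝ → ℝ, CbTwo f → ∀ t : ℝ, 0 ≤ t →
      ∫ x, f x ∂(νp t) = f 0
        + αp * (∫ s in (0:ℝ)..t, ∫ x, deriv f x ∂(νp s))
        + (1 / 2) * ∫ s in (0:ℝ)..t, ∫ x, ∫ y, deltaF f x y * (x + y) ∂(νp s) ∂(νp s))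
    -- `η` solves the equation with drift `αm` and kernel x+y
    (heqm : ∀ f : ℝ → ℝ, CbTwo f → ∀ t : ℝ, 0 ≤ t →
      ∫ x, f x ∂(η t) = f 0
        + αm * (∫ s in (0:ℝ)..t, ∫ x, deriv f x ∂(η s))
        + (1 / 2) * ∫ s in (0:ℝ)..t, ∫ x, ∫ y, deltaF f x y * (x + y) ∂(η s) ∂(η s))
    -- the reflected family and the three-component mixture
    (νm : ℝ → Measure ℝ) (hνm : ∀ t, νm t = Measure.map (fun x : ℝ => -x) (η t))
    (μ : ℝ → Measure ℝ)
    (hμ : ∀ t : ℝ, μ t = ENNReal.ofReal lam • νp (lam * t)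
      + ENNReal.ofReal γ • Measure.dirac (0:ℝ)
      + ENNReal.ofReal lamStar • νm (lamStar * t)) :
    (0 < lam ∧ 0 < lamStar ∧ 0 < γ ∧ lam + lamStar + γ = 1) ∧
    (0 ≤ α ∧ α < 1) ∧
    -- `μ` solves the equation with drift α and kernel |x|+|y|
    (∀ f : ℝ → ℝ, CbTwo f → ∀ t : ℝ, 0 ≤ t →
      ∫ x, f x ∂(μ t) = f 0
        + α * (∫ s in (0:ℝ)..t, ∫ x, deriv f x ∂(μ s))
        + (1 / 2) * ∫ s in (0:ℝ)..t, ∫ x, ∫ y,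
            deltaF f x y * (|x| + |y|) ∂(μ s) ∂(μ s)) := by
  have hαm : 1 < αm := lt_of_lt_of_le hαp hord
  have hD : 0 < αp * αm - 1 := by nlinarith
  have hDne : αp * αm - 1 ≠ 0 := ne_of_gt hD
  have hlam0 : 0 < lam := by rw [hlam]; exact div_pos (by linarith) hD
  have hlamS0 : 0 < lamStar := by rw [hlamStar]; exact div_pos (by linarith) hD
  have hγ0 : 0 < γ := by rw [hγ]; exact div_pos (by nlinarith) hD
  have hsum : lam + lamStar + γ = 1 := by rw [hlam, hlamStar, hγ, ← add_div, ← add_div, div_eq_one_iff_eq hDne]; ring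
  have hα0 : 0 ≤ α := by rw [hα]; exact div_nonneg (by linarith) hD.le
  have hα1 : α < 1 := by rw [hα, div_lt_one hD]; nlinarith
  have hidA : αp * lam = α + lamStar + γ := by
    rw [hlam, hlamStar, hγ, hα]; field_simp; ring
  have hidB : αm * lamStar = lam + γ - α := by
    rw [hlam, hlamStar, hγ, hα]; field_simp; ring
  have hidC : α = lam - lamStar := by
    rw [hlam, hlamStar, hα]; field_simp; ring
  refine ⟨⟨hlam0, hlamS0, hγ0, hsum⟩, ⟨hα0, hα1⟩, ?_⟩
  intro f hf t ht
  have hnegm : Measurable (fun x : ℝ => -x) := measurable_neg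
  have ip : ∀ u, IsProbabilityMeasure (νp u) := fun u => (hprob u).1
  have ih : ∀ u, IsProbabilityMeasure (η u) := fun u => (hprob u).2
  have hsmf : StronglyMeasurable f := hf.1.continuous.stronglyMeasurable
  rcases eq_or_lt_of_le ht with rfl | ht0
  · -- t = 0 case
    simp only [intervalIntegral.integral_same, mul_zero, add_zero]
    rw [hμ 0]
    simp only [mul_zero]
    rw [hνp0, hνm 0, hη0, Measure.map_dirac' hnegm, neg_zero]
    rw [integral_mixture hlam0.le hγ0.le hlamS0.le hsmf
      (integrable_dirac0 hsmf) (integrable_dirac0 hsmf)]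
    rw [integral_dirac]
    linear_combination (f 0) * hsum
  · -- t > 0 case
    have hg : CbTwo (fun z => f (-z)) := cbTwo_negcomp hf
    obtain ⟨C, hC⟩ := hf.2
    have hC0 : 0 ≤ C := le_trans (abs_nonneg _) (hC 0).1
    have hCd : ∀ x y, |deltaF f x y| ≤ C := abs_deltaF_le hf (fun x => (hC x).2.2)
    obtain ⟨Cg, hCg⟩ := hg.2
    have hCg0 : 0 ≤ Cg := le_trans (abs_nonneg _) (hCg 0).1
    have hCgd : ∀ x y, |deltaF (fun z => f (-z)) x y| ≤ Cg :=
      abs_deltaF_le hg (fun x => (hCg x).2.2)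
    have hg0 : (fun z => f (-z)) 0 = f 0 := by norm_num
    -- measurability of the time families
    have hmp : ∀ h : ℝ → ℝ, CbTwo h → Measurable (fun u => ∫ x, h x ∂(νp (max u 0))) := by
      intro h hh
      have heq : (fun u => ∫ x, h x ∂(νp (max u 0))) = fun u =>
          h 0 + αp * (∫ s in (0:ℝ)..(max u 0), ∫ x, deriv h x ∂(νp s))
          + (1/2) * ∫ s in (0:ℝ)..(max u 0),
              ∫ x, ∫ y, deltaF h x y * (x + y) ∂(νp s) ∂(νp s) := by
        funext u; exact heqp h hh (max u 0) (le_max_right _ _)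
      rw [heq]
      have hmax : Measurable (fun u : ℝ => max u 0) := measurable_id.max measurable_const
      have m1 := (measurable_primitive (fun s => ∫ x, deriv h x ∂(νp s))).comp hmax
      have m2 := (measurable_primitive
        (fun s => ∫ x, ∫ y, deltaF h x y * (x + y) ∂(νp s) ∂(νp s))).comp hmax
      exact (measurable_const.add (m1.const_mul αp)).add (m2.const_mul (1/2))
    have hmm : ∀ h : ℝ → ℝ, CbTwo h → Measurable (fun u => ∫ x, h x ∂(η (max u 0))) := by
      intro h hh
      have heq : (fun u => ∫ x, h x ∂(η (max u 0))) = fun u =>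
          h 0 + αm * (∫ s in (0:ℝ)..(max u 0), ∫ x, deriv h x ∂(η s))
          + (1/2) * ∫ s in (0:ℝ)..(max u 0),
              ∫ x, ∫ y, deltaF h x y * (x + y) ∂(η s) ∂(η s) := by
        funext u; exact heqm h hh (max u 0) (le_max_right _ _)
      rw [heq]
      have hmax : Measurable (fun u : ℝ => max u 0) := measurable_id.max measurable_const
      have m1 := (measurable_primitive (fun s => ∫ x, deriv h x ∂(η s))).comp hmax
      have m2 := (measurable_primitive
        (fun s => ∫ x, ∫ y, deltaF h x y * (x + y) ∂(η s) ∂(η s))).comp hmax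
      exact (measurable_const.add (m1.const_mul αm)).add (m2.const_mul (1/2))
    have hκp : Measurable (fun u => νp (max u 0)) := measurable_family νp ip hmp
    have hκm : Measurable (fun u => η (max u 0)) := measurable_family η ih hmm
    -- the four time functions
    set P1 : ℝ → ℝ := fun u => ∫ x, deriv f x ∂(νp (max u 0)) with hP1def
    set P2 : ℝ → ℝ := fun u =>
      ∫ x, ∫ y, deltaF f x y * (x + y) ∂(νp (max u 0)) ∂(νp (max u 0)) with hP2def
    set Q1 : ℝ → ℝ := fun u => ∫ x, deriv (fun z => f (-z)) x ∂(η (max u 0)) with hQ1def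
    set Q2 : ℝ → ℝ := fun u =>
      ∫ x, ∫ y, deltaF (fun z => f (-z)) x y * (x + y) ∂(η (max u 0)) ∂(η (max u 0)) with hQ2def
    have hP1m : Measurable P1 :=
      measurable_single_integral hκp (fun u => ip _) (cb_cont1 hf).measurable
    have hQ1m : Measurable Q1 :=
      measurable_single_integral hκm (fun u => ih _) (cb_cont1 hg).measurable
    have hP2m : Measurable P2 := by
      have hk : Measurable (fun p : ℝ × ℝ => deltaF f p.1 p.2 * (p.1 + p.2)) :=
        (measurable_deltaF_pair hf).mul (measurable_fst.add measurable_snd)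
      exact measurable_double_integral hκp (fun u => ip _) hk
    have hQ2m : Measurable Q2 := by
      have hk : Measurable (fun p : ℝ × ℝ => deltaF (fun z => f (-z)) p.1 p.2 * (p.1 + p.2)) :=
        (measurable_deltaF_pair hg).mul (measurable_fst.add measurable_snd)
      exact measurable_double_integral hκm (fun u => ih _) hk
    -- bounds
    have hP1b : ∀ u, |P1 u| ≤ C := fun u => abs_integral_le_bdd (fun x => (hC x).2.1)
    have hQ1b : ∀ u, |Q1 u| ≤ Cg := fun u => abs_integral_le_bdd (fun x => (hCg x).2.1)
    obtain ⟨M, hM⟩ := hbd (max (lam * t) (lamStar * t))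
      (lt_max_iff.2 (Or.inl (mul_pos hlam0 ht0)))
    have hP2b : ∀ s ∈ Ioc (0:ℝ) t, |P2 (lam * s)| ≤ 2 * C * M := by
      intro s hs
      have h1 : (0:ℝ) ≤ lam * s := (mul_pos hlam0 hs.1).le
      have hmax : max (lam * s) 0 = lam * s := max_eq_left h1
      simp only [hP2def, hmax]
      have hb1 := abs_double_integral_le (hint (lam * s) h1).1 hC0 hf hCd
      have hMs := (hM (lam * s) ⟨h1, le_trans
        (by nlinarith [hs.2] : lam * s ≤ lam * t) (le_max_left _ _)⟩).1
      calc |∫ x, ∫ y, deltaF f x y * (x + y) ∂(νp (lam*s)) ∂(νp (lam*s))|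
          ≤ 2 * C * ∫ x, |x| ∂(νp (lam*s)) := hb1
        _ ≤ 2 * C * M := by nlinarith
    have hQ2b : ∀ s ∈ Ioc (0:ℝ) t, |Q2 (lamStar * s)| ≤ 2 * Cg * M := by
      intro s hs
      have h1 : (0:ℝ) ≤ lamStar * s := (mul_pos hlamS0 hs.1).le
      have hmax : max (lamStar * s) 0 = lamStar * s := max_eq_left h1
      simp only [hQ2def, hmax]
      have hb1 := abs_double_integral_le (hint (lamStar * s) h1).2 hCg0 hg hCgd
      have hMs := (hM (lamStar * s) ⟨h1, le_trans
        (by nlinarith [hs.2] : lamStar * s ≤ lamStar * t) (le_max_right _ _)⟩).2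
      calc |∫ x, ∫ y, deltaF (fun z => f (-z)) x y * (x + y)
            ∂(η (lamStar*s)) ∂(η (lamStar*s))|
          ≤ 2 * Cg * ∫ x, |x| ∂(η (lamStar*s)) := hb1
        _ ≤ 2 * Cg * M := by nlinarith
    -- interval integrability
    have hIIP1 : IntervalIntegrable (fun s => P1 (lam * s)) volume 0 t :=
      intervalIntegrable_of_bdd ht (hP1m.comp (measurable_id.const_mul lam))
        (fun s _ => hP1b _)
    have hIIQ1 : IntervalIntegrable (fun s => Q1 (lamStar * s)) volume 0 t :=
      intervalIntegrable_of_bdd ht (hQ1m.comp (measurable_id.const_mul lamStar))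
        (fun s _ => hQ1b _)
    have hIIP2 : IntervalIntegrable (fun s => P2 (lam * s)) volume 0 t :=
      intervalIntegrable_of_bdd ht (hP2m.comp (measurable_id.const_mul lam)) hP2b
    have hIIQ2 : IntervalIntegrable (fun s => Q2 (lamStar * s)) volume 0 t :=
      intervalIntegrable_of_bdd ht (hQ2m.comp (measurable_id.const_mul lamStar)) hQ2b
    -- the four integrals
    set A1 : ℝ := ∫ s in (0:ℝ)..t, P1 (lam * s) with hA1
    set A2 : ℝ := ∫ s in (0:ℝ)..t, P2 (lam * s) with hA2
    set B1 : ℝ := ∫ s in (0:ℝ)..t, Q1 (lamStar * s) with hB1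
    set B2 : ℝ := ∫ s in (0:ℝ)..t, Q2 (lamStar * s) with hB2
    -- change of variables
    have hcv : ∀ (F : ℝ → ℝ) (c : ℝ), 0 < c →
        (∫ s in (0:ℝ)..(c * t), F s) = c * ∫ s in (0:ℝ)..t, F (c * s) := by
      intro F c hc
      have h := intervalIntegral.integral_comp_mul_left (a := (0:ℝ)) (b := t) F (ne_of_gt hc)
      rw [mul_zero] at h
      rw [h, smul_eq_mul, ← mul_assoc, mul_inv_cancel₀ (ne_of_gt hc), one_mul]
    -- the two hypothesis equations at the rescaled times
    have hLp := heqp f hf (lam * t) (mul_pos hlam0 ht0).le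
    have hLm := heqm (fun z => f (-z)) hg (lamStar * t) (mul_pos hlamS0 ht0).le
    have e1 : (∫ s in (0:ℝ)..(lam * t), ∫ x, deriv f x ∂(νp s))
        = ∫ s in (0:ℝ)..(lam * t), P1 s := by
      apply intervalIntegral.integral_congr
      intro s hs
      rw [uIcc_of_le (mul_pos hlam0 ht0).le] at hs
      simp only [hP1def, max_eq_left hs.1]
    have e2 : (∫ s in (0:ℝ)..(lam * t),
          ∫ x, ∫ y, deltaF f x y * (x + y) ∂(νp s) ∂(νp s))
        = ∫ s in (0:ℝ)..(lam * t), P2 s := by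
      apply intervalIntegral.integral_congr
      intro s hs
      rw [uIcc_of_le (mul_pos hlam0 ht0).le] at hs
      simp only [hP2def, max_eq_left hs.1]
    have e3 : (∫ s in (0:ℝ)..(lamStar * t), ∫ x, deriv (fun z => f (-z)) x ∂(η s))
        = ∫ s in (0:ℝ)..(lamStar * t), Q1 s := by
      apply intervalIntegral.integral_congr
      intro s hs
      rw [uIcc_of_le (mul_pos hlamS0 ht0).le] at hs
      simp only [hQ1def, max_eq_left hs.1]
    have e4 : (∫ s in (0:ℝ)..(lamStar * t),
          ∫ x, ∫ y, deltaF (fun z => f (-z)) x y * (x + y) ∂(η s) ∂(η s))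
        = ∫ s in (0:ℝ)..(lamStar * t), Q2 s := by
      apply intervalIntegral.integral_congr
      intro s hs
      rw [uIcc_of_le (mul_pos hlamS0 ht0).le] at hs
      simp only [hQ2def, max_eq_left hs.1]
    rw [e1, e2, hcv P1 lam hlam0, hcv P2 lam hlam0] at hLp
    rw [e3, e4, hcv Q1 lamStar hlamS0, hcv Q2 lamStar hlamS0] at hLm
    -- LHS mixture expansion
    have hfb : ∀ x, |f x| ≤ C := fun x => (hC x).1
    have hLHS : ∫ x, f x ∂(μ t) = lam * (∫ x, f x ∂(νp (lam * t))) + γ * f 0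
        + lamStar * (∫ x, f (-x) ∂(η (lamStar * t))) := by
      rw [hμ t, hνm]
      haveI : IsProbabilityMeasure (Measure.map (fun x : ℝ => -x) (η (lamStar * t))) :=
        Measure.isProbabilityMeasure_map hnegm.aemeasurable
      rw [integral_mixture hlam0.le hγ0.le hlamS0.le hsmf
        (integrable_of_bdd hsmf.aestronglyMeasurable hfb)
        (integrable_of_bdd hsmf.aestronglyMeasurable hfb)]
      rw [integral_map hnegm.aemeasurable hsmf.aestronglyMeasurable]
    -- goal-side first integral
    have hAeq : (∫ s in (0:ℝ)..t, ∫ x, deriv f x ∂(μ s))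
        = lam * A1 + γ * (deriv f 0) * t - lamStar * B1 := by
      have hdsm : StronglyMeasurable (deriv f) := (cb_cont1 hf).stronglyMeasurable
      have hdb : ∀ x, |deriv f x| ≤ C := fun x => (hC x).2.1
      have hcongA : ∀ᵐ s ∂(volume : Measure ℝ), s ∈ Ι (0:ℝ) t →
          (∫ x, deriv f x ∂(μ s))
            = lam * P1 (lam * s) + γ * (deriv f 0) - lamStar * Q1 (lamStar * s) := by
        refine Eventually.of_forall (fun s hs => ?_)
        rw [uIoc_of_le ht] at hs
        have hl : 0 ≤ lam * s := (mul_pos hlam0 hs.1).le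
        have hlS : 0 ≤ lamStar * s := (mul_pos hlamS0 hs.1).le
        rw [hμ s, hνm]
        haveI : IsProbabilityMeasure (Measure.map (fun x : ℝ => -x) (η (lamStar * s))) :=
          Measure.isProbabilityMeasure_map hnegm.aemeasurable
        rw [integral_mixture hlam0.le hγ0.le hlamS0.le hdsm
          (integrable_of_bdd hdsm.aestronglyMeasurable hdb)
          (integrable_of_bdd hdsm.aestronglyMeasurable hdb)]
        rw [integral_map hnegm.aemeasurable hdsm.aestronglyMeasurable]
        have hneg : (fun u => deriv f (-u)) = fun u => -(deriv (fun z => f (-z)) u) := by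
          funext u
          simp only [deriv_negcomp, neg_neg]
        rw [hneg, integral_neg]
        simp only [hP1def, hQ1def, max_eq_left hl, max_eq_left hlS]
        ring
      rw [intervalIntegral.integral_congr_ae hcongA]
      have hII1 : IntervalIntegrable (fun s => lam * P1 (lam * s) + γ * (deriv f 0))
          volume 0 t := (hIIP1.const_mul lam).add (intervalIntegrable_const)
      rw [intervalIntegral.integral_sub hII1 (hIIQ1.const_mul lamStar)]
      rw [intervalIntegral.integral_add (hIIP1.const_mul lam) intervalIntegrable_const]
      rw [intervalIntegral.integral_const_mul, intervalIntegral.integral_const_mul,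
        intervalIntegral.integral_const_mul, intervalIntegral.integral_const]
      rw [← hA1, ← hB1]
      simp only [smul_eq_mul, sub_zero]
      ring
    -- goal-side double integral
    have hGeq : (∫ s in (0:ℝ)..t, ∫ x, ∫ y, deltaF f x y * (|x| + |y|) ∂(μ s) ∂(μ s))
        = lam^2 * A2 + lamStar^2 * B2 + 2*lam*(lamStar + γ) * A1
          + 2*lamStar*(lam + γ) * B1 + 2*γ*(lamStar - lam) * (deriv f 0) * t := by
      have hcongG : ∀ᵐ s ∂(volume : Measure ℝ), s ∈ Ι (0:ℝ) t →
          (∫ x, ∫ y, deltaF f x y * (|x| + |y|) ∂(μ s) ∂(μ s))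
            = lam^2 * P2 (lam * s) + lamStar^2 * Q2 (lamStar * s)
              + 2*lam*(lamStar + γ) * P1 (lam * s) + 2*lamStar*(lam + γ) * Q1 (lamStar * s)
              + 2*γ*(lamStar - lam) * (deriv f 0) := by
        refine Eventually.of_forall (fun s hs => ?_)
        rw [uIoc_of_le ht] at hs
        have hl : 0 ≤ lam * s := (mul_pos hlam0 hs.1).le
        have hlS : 0 ≤ lamStar * s := (mul_pos hlamS0 hs.1).le
        have hpos1 : ∀ᵐ x ∂(νp (lam * s)), 0 < x :=
          ae_pos_of_measure_Ioi (hνppos _ (mul_pos hlam0 hs.1))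
        have hpos2 : ∀ᵐ x ∂(η (lamStar * s)), 0 < x :=
          ae_pos_of_measure_Ioi (hηpos _ (mul_pos hlamS0 hs.1))
        rw [hμ s, hνm]
        rw [double_integral_mixture f hf hlam0.le hγ0.le hlamS0.le
          (νp (lam * s)) (η (lamStar * s)) hpos1 hpos2
          (hint _ hl).1 (hint _ hlS).2]
        simp only [hP1def, hP2def, hQ1def, hQ2def, max_eq_left hl, max_eq_left hlS]
      rw [intervalIntegral.integral_congr_ae hcongG]
      have i1 : IntervalIntegrable (fun s => lam^2 * P2 (lam * s)) volume 0 t :=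
        hIIP2.const_mul _
      have i2 : IntervalIntegrable (fun s => lamStar^2 * Q2 (lamStar * s)) volume 0 t :=
        hIIQ2.const_mul _
      have i3 : IntervalIntegrable (fun s => 2*lam*(lamStar + γ) * P1 (lam * s)) volume 0 t :=
        hIIP1.const_mul _
      have i4 : IntervalIntegrable (fun s => 2*lamStar*(lam + γ) * Q1 (lamStar * s)) volume 0 t :=
        hIIQ1.const_mul _
      rw [intervalIntegral.integral_add (((i1.add i2).add i3).add i4) intervalIntegrable_const]
      rw [intervalIntegral.integral_add ((i1.add i2).add i3) i4]
      rw [intervalIntegral.integral_add (i1.add i2) i3]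
      rw [intervalIntegral.integral_add i1 i2]
      rw [intervalIntegral.integral_const_mul, intervalIntegral.integral_const_mul,
        intervalIntegral.integral_const_mul, intervalIntegral.integral_const_mul,
        intervalIntegral.integral_const]
      rw [← hA1, ← hA2, ← hB1, ← hB2]
      simp only [smul_eq_mul, sub_zero]
      ring
    -- final assembly
    rw [hLHS, hLp, hLm, hAeq, hGeq, neg_zero]
    linear_combination (lam * A1) * hidA + (lamStar * B1) * hidB
      - (γ * (deriv f 0) * t) * hidC + (f 0) * hsum
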